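/- Assume b ≠ 0. Suppose a tuple (g₁, g₂, h₁, h₂, k₁, k₂) of polynomials in ℂ[λ,∂] satisfies the system S(a,b,c) and moreover g₂(λ,∂) = ∂ + (a−1)λ + b + c and h₂(λ,∂) = ∂ + λ + c. Then g₁ = h₁ = k₁ = k₂ = 0. -/

import Mathlib

open MvPolynomial

noncomputable section

/-- Polynomials in `ℂ[λ, ∂]`: variable `0` is `λ`, variable `1` is `∂`. -/
abbrev P2 : Type := MvPolynomial (Fin 2) ℂ

/-- Polynomials in `ℂ[λ, μ, ∂]`: variable `0` is `λ`, variable `1` is `μ`, variable `2` is `∂`. -/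
abbrev P3 : Type := MvPolynomial (Fin 3) ℂ

/-- Substitution: `sb p u v` is `p(u, v)`, the image of `p` under `λ ↦ u`, `∂ ↦ v`. -/
def sb {n : ℕ} (p : P2) (u v : MvPolynomial (Fin n) ℂ) : MvPolynomial (Fin n) ℂ :=
  aeval ![u, v] p

/-- `λ` in `ℂ[λ,μ,∂]`. -/
def lm : P3 := X 0
/-- `μ` in `ℂ[λ,μ,∂]`. -/
def mu : P3 := X 1
/-- `∂` in `ℂ[λ,μ,∂]`. -/
def pa : P3 := X 2
/-- `λ` in `ℂ[λ,∂]`. -/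
def lm' : P2 := X 0
/-- `∂` in `ℂ[λ,∂]`. -/
def pa' : P2 := X 1

/-- The system `S(a,b,c)` of equations (E1)-(E14). -/
def SatS (a b c : ℂ) (g1 g2 h1 h2 k1 k2 : P2) : Prop :=
  -- (E1)
  ((C (a - 1) * lm - mu + C b) * sb h1 (lm + mu) pa =
      sb h1 mu (lm + pa) * (pa + lm + C c) + sb h2 mu (lm + pa) * sb g1 lm pa
        - (pa + mu + lm + C c) * sb h1 mu pa) ∧
  -- (E2)
  ((C (a - 1) * lm - mu + C b) * sb h2 (lm + mu) pa =
      sb h2 mu (lm + pa) * sb g2 lm pa - (pa + mu + lm + C c) * sb h2 mu pa) ∧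
  -- (E3)
  ((lm - mu) * sb g1 (lm + mu) pa =
      sb g1 mu (lm + pa) * (pa + lm + C c) + sb g2 mu (lm + pa) * sb g1 lm pa
        - sb g1 lm (mu + pa) * (pa + mu + C c) - sb g2 lm (mu + pa) * sb g1 mu pa) ∧
  -- (E4)
  ((lm - mu) * sb g2 (lm + mu) pa =
      sb g2 mu (lm + pa) * sb g2 lm pa - sb g2 lm (mu + pa) * sb g2 mu pa) ∧
  -- (E5)
  ((C (a - 1) * lm - mu + C b) * sb k1 (lm + mu) pa =
      sb k1 mu (lm + pa) * (pa + lm + C c) + sb k2 mu (lm + pa) * sb g1 lm pa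
        - sb g1 lm (mu + pa) * sb h1 mu pa - sb g2 lm (mu + pa) * sb k1 mu pa) ∧
  -- (E6)
  ((C (a - 1) * lm - mu + C b) * sb k2 (lm + mu) pa =
      sb k2 mu (lm + pa) * sb g2 lm pa - sb g1 lm (mu + pa) * sb h2 mu pa
        - sb g2 lm (mu + pa) * sb k2 mu pa) ∧
  -- (E7)
  (sb h1 mu (lm + pa) * sb h1 lm pa + sb h2 mu (lm + pa) * sb k1 lm pa =
      sb h1 lm (mu + pa) * sb h1 mu pa + sb h2 lm (mu + pa) * sb k1 mu pa) ∧
  -- (E8)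
  (sb h1 mu (lm + pa) * sb h2 lm pa + sb h2 mu (lm + pa) * sb k2 lm pa =
      sb h1 lm (mu + pa) * sb h2 mu pa + sb h2 lm (mu + pa) * sb k2 mu pa) ∧
  -- (E9)
  (sb k1 mu (lm + pa) * sb h1 lm pa + sb k2 mu (lm + pa) * sb k1 lm pa =
      sb k1 lm (mu + pa) * sb h1 mu pa + sb k2 lm (mu + pa) * sb k1 mu pa) ∧
  -- (E10)
  (sb k1 mu (lm + pa) * sb h2 lm pa + sb k2 mu (lm + pa) * sb k2 lm pa =
      sb k1 lm (mu + pa) * sb h2 mu pa + sb k2 lm (mu + pa) * sb k2 mu pa) ∧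
  -- (E11)
  (g1 = sb h1 (-lm' - pa') pa') ∧
  -- (E12)
  (g2 - sb h2 (-lm' - pa') pa' = pa' + C a * lm' + C b) ∧
  -- (E13)
  (k1 = sb k1 (-lm' - pa') pa') ∧
  -- (E14)
  (k2 = sb k2 (-lm' - pa') pa')

lemma sb_comp {n m : ℕ} (f : MvPolynomial (Fin n) ℂ →ₐ[ℂ] MvPolynomial (Fin m) ℂ)
    (p : P2) (u v : MvPolynomial (Fin n) ℂ) :
    f (sb p u v) = sb p (f u) (f v) := by
  unfold sb
  induction p using MvPolynomial.induction_on with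
  | C a => simp
  | add p q hp hq => rw [map_add, map_add, map_add, hp, hq]
  | mul_X p i hp =>
    rw [map_mul, map_mul, map_mul, aeval_X, aeval_X, hp]
    fin_cases i <;> simp

lemma sb_id (p : P2) : sb p lm' pa' = p := by
  have h : ![lm', pa'] = X := by
    funext i; fin_cases i <;> rfl
  simp [sb, h]

lemma sb_zero {n : ℕ} (u v : MvPolynomial (Fin n) ℂ) : sb (0 : P2) u v = 0 := by
  simp [sb]

/-- Lemma 3.5: in Case (C) with `b ≠ 0`, i.e. when
`g₂ = ∂ + (a−1)λ + b + c` and `h₂ = ∂ + λ + c`, we get `g₁ = h₁ = k₁ = k₂ = 0`. -/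
theorem stmt6 (a b c : ℂ) (hb : b ≠ 0) (g1 g2 h1 h2 k1 k2 : P2)
    (hS : SatS a b c g1 g2 h1 h2 k1 k2)
    (hg2 : g2 = pa' + C (a - 1) * lm' + C (b + c)) (hh2 : h2 = pa' + lm' + C c) :
    g1 = 0 ∧ h1 = 0 ∧ k1 = 0 ∧ k2 = 0 := by
  obtain ⟨e1, e2, e3, e4, e5, e6, e7, e8, e9, e10, e11, e12, e13, e14⟩ := hS
  clear e2 e3 e4 e7 e8 e9 e10 e12 e13
  have hg2' : ∀ u v : P2, sb g2 u v = v + (C a - 1) * u + C b + C c := by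
    intro u v
    rw [hg2]
    simp [sb, pa', lm', C_sub, C_add]
    ring
  have hh2' : ∀ u v : P2, sb h2 u v = v + u + C c := by
    intro u v
    rw [hh2]
    simp [sb, pa', lm']
  -- apply the substitution λ ↦ 0, μ ↦ λ', ∂ ↦ ∂' to (E1), (E5), (E6)
  have E1 := congrArg (fun q : P3 => (aeval ![(0 : P2), lm', pa'] : P3 →ₐ[ℂ] P2) q) e1
  have E5 := congrArg (fun q : P3 => (aeval ![(0 : P2), lm', pa'] : P3 →ₐ[ℂ] P2) q) e5
  have E6 := congrArg (fun q : P3 => (aeval ![(0 : P2), lm', pa'] : P3 →ₐ[ℂ] P2) q) e6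
  simp only [map_mul, map_add, map_sub, map_zero, sb_comp, aeval_X, aeval_C,
    algebraMap_eq, lm, mu, pa, Matrix.cons_val_zero, Matrix.cons_val_one,
    Matrix.head_cons, Matrix.cons_val_two, Matrix.tail_cons, mul_zero, zero_add,
    add_zero, sb_id, hg2', hh2'] at E1 E5 E6
  -- from E1:  b · h₁ = (∂ + λ + c) · g₁(0, ∂)
  have hH : C b * h1 = (pa' + lm' + C c) * sb g1 0 pa' := by linear_combination E1
  -- from E6:  b · k₂ = −(λ + ∂ + c) · g₁(0, λ + ∂)
  have hK : C b * k2 = -((lm' + pa' + C c) * sb g1 0 (lm' + pa')) := by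
    linear_combination E6
  -- apply λ ↦ −λ−∂ to hK and use (E14)
  have K2 := congrArg (fun q : P2 => (aeval ![-lm' - pa', pa'] : P2 →ₐ[ℂ] P2) q) hK
  simp only [map_mul, map_add, map_sub, map_neg, map_zero, sb_comp, aeval_X, aeval_C,
    algebraMap_eq, lm', pa', Matrix.cons_val_zero, Matrix.cons_val_one,
    Matrix.head_cons] at K2
  rw [show -X 0 - X 1 + X 1 = (-X 0 : P2) by ring, ← lm', ← pa'] at K2
  rw [show (aeval ![-lm' - pa', pa'] : P2 →ₐ[ℂ] P2) k2 = sb k2 (-lm' - pa') pa' from rfl,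
    ← e14] at K2
  -- combine: (λ + ∂ + c) · g₁(0, λ+∂) = (c − λ) · g₁(0, −λ)
  have key : (lm' + pa' + C c) * sb g1 0 (lm' + pa') = (C c - lm') * sb g1 0 (-lm') := by
    linear_combination hK - K2
  -- substitute ∂ ↦ ∂ − λ
  have KD := congrArg (fun q : P2 => (aeval ![lm', pa' - lm'] : P2 →ₐ[ℂ] P2) q) key
  simp only [map_mul, map_add, map_sub, map_neg, map_zero, sb_comp, aeval_X, aeval_C,
    algebraMap_eq, lm', pa', Matrix.cons_val_zero, Matrix.cons_val_one,
    Matrix.head_cons] at KD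
  rw [show (X 0 : P2) + (X 1 - X 0) = X 1 by ring, ← lm', ← pa'] at KD
  -- substitute λ ↦ c
  have KE := congrArg (fun q : P2 => (aeval ![C c, pa'] : P2 →ₐ[ℂ] P2) q) KD
  simp only [map_mul, map_add, map_sub, map_neg, map_zero, sb_comp, aeval_X, aeval_C,
    algebraMap_eq, lm', pa', Matrix.cons_val_zero, Matrix.cons_val_one,
    Matrix.head_cons, sub_self, zero_mul] at KE
  -- so (∂ + c) · g₁(0, ∂) = 0, hence g₁(0, ∂) = 0
  have hpc : (X 1 + C c : P2) ≠ 0 := by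
    intro h
    have h2 := congrArg (eval ![0, 1 - c]) h
    rw [map_add, eval_X, map_zero] at h2
    simp only [Matrix.cons_val_one, Matrix.head_cons, Matrix.cons_val_zero, eval_C] at h2
    exact one_ne_zero (by linear_combination h2)
  have hφ : sb g1 0 pa' = 0 := by
    rcases mul_eq_zero.mp KE with h | h
    · exact absurd h hpc
    · exact h
  have hh1 : h1 = 0 := by
    have h0 : C b * h1 = 0 := by rw [hH, hφ, mul_zero]
    rcases mul_eq_zero.mp h0 with h | h
    · exact absurd (by simpa using h) hb
    · exact h
  have hg1 : g1 = 0 := by rw [e11, hh1, sb_zero]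
  have hk2 : k2 = 0 := by
    rw [hg1, sb_zero, mul_zero, neg_zero] at hK
    rcases mul_eq_zero.mp hK with h | h
    · exact absurd (by simpa using h) hb
    · exact h
  have hk1 : k1 = 0 := by
    rw [hg1, hh1] at E5
    simp only [sb_zero, mul_zero, zero_mul, sub_zero, add_zero] at E5
    have h0 : (C b + C b) * k1 = 0 := by linear_combination E5
    rcases mul_eq_zero.mp h0 with h | h
    · rw [← C_add, C_eq_zero] at h
      exact absurd (by linear_combination h / 2) hb
    · exact h
  exact ⟨hg1, hh1, hk1, hk2⟩

end
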